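/- arXiv:2406.13922 — 3 statements merged into one kernel-verified Lean document; each statement's English description precedes it below -/
import Mathlib

section
/- Let c ≥ 0 and let W = A + iB be a standard circularly-symmetric complex Gaussian random variable, i.e. A and B are independent real Gaussian random variables with mean 0 and variance 1/2. Then Var[ (1 − |√c·W − 1|² / (1+c))·log₂ e ] = (1 − 1/(1+c)²)·(log₂ e)². -/
open MeasureTheory ProbabilityTheory

open Real Set
open scoped ENNReal NNReal

lemma aux_int (k : ℕ) : Integrable (fun x : ℝ => x ^ k * Real.exp (-x ^ 2)) := by
  have h := integrable_rpow_mul_exp_neg_mul_sq (b := 1) one_pos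
      (s := (k : ℝ)) (lt_of_lt_of_le neg_one_lt_zero (Nat.cast_nonneg k))
  simpa [Real.rpow_natCast] using h

lemma aux_odd (k : ℕ) (hk : Odd k) : ∫ x : ℝ, x ^ k * Real.exp (-x ^ 2) = 0 := by
  have h : ∫ x : ℝ, (-x) ^ k * Real.exp (-(-x) ^ 2) = ∫ x : ℝ, x ^ k * Real.exp (-x ^ 2) :=
    by exact integral_neg_eq_self (fun x : ℝ => x ^ k * Real.exp (-x ^ 2)) volume
  simp only [hk.neg_pow, neg_sq, neg_mul] at h
  rw [integral_neg] at h
  linarith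

lemma aux_Ioi (k : ℕ) : ∫ x in Ioi (0:ℝ), x ^ k * Real.exp (-x ^ 2)
    = (1 / 2) * Real.Gamma (((k : ℝ) + 1) / 2) := by
  have h := integral_rpow_mul_exp_neg_rpow (p := 2) (q := (k : ℝ)) two_pos
      (lt_of_lt_of_le neg_one_lt_zero (Nat.cast_nonneg k))
  rw [← h]
  refine setIntegral_congr_fun measurableSet_Ioi fun x hx => ?_
  rw [Real.rpow_natCast, show (2:ℝ) = ((2:ℕ):ℝ) by norm_num, Real.rpow_natCast]

lemma aux_even (k : ℕ) : ∫ x : ℝ, x ^ (2 * k) * Real.exp (-x ^ 2)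
    = Real.Gamma ((((2 * k : ℕ) : ℝ) + 1) / 2) := by
  have h1 : ∫ x : ℝ, x ^ (2 * k) * Real.exp (-x ^ 2)
      = ∫ x : ℝ, (fun t : ℝ => t ^ (2 * k) * Real.exp (-t ^ 2)) |x| := by
    congr 1; funext x
    simp only
    rw [Even.pow_abs (even_two_mul k), sq_abs]
  rw [h1, integral_comp_abs (f := fun t : ℝ => t ^ (2*k) * Real.exp (-t^2)), aux_Ioi]
  ring

lemma gI0 : ∫ x : ℝ, Real.exp (-x ^ 2) = Real.sqrt π := by
  have := integral_gaussian 1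
  simpa using this

lemma gI2 : ∫ x : ℝ, x ^ 2 * Real.exp (-x ^ 2) = Real.sqrt π / 2 := by
  have h := aux_even 1
  norm_num at h
  rw [show ((3:ℝ))/2 = 1/2 + 1 by norm_num, Real.Gamma_add_one (by norm_num),
    Real.Gamma_one_half_eq] at h
  rw [h]; ring

lemma gI4 : ∫ x : ℝ, x ^ 4 * Real.exp (-x ^ 2) = 3 * Real.sqrt π / 4 := by
  have h := aux_even 2
  norm_num at h
  rw [show ((5:ℝ))/2 = 3/2 + 1 by norm_num, Real.Gamma_add_one (by norm_num),
    show ((3:ℝ))/2 = 1/2 + 1 by norm_num, Real.Gamma_add_one (by norm_num),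
    Real.Gamma_one_half_eq] at h
  rw [h]; ring

lemma gdens_meas : Measurable (fun x : ℝ => ((Real.sqrt π)⁻¹ * Real.exp (-x ^ 2)).toNNReal) :=
  (measurable_const.mul ((measurable_id.pow_const 2).neg.exp)).real_toNNReal

lemma gauss_half_eq : gaussianReal 0 (1/2)
    = (volume : Measure ℝ).withDensity
        (fun x => (((Real.sqrt π)⁻¹ * Real.exp (-x ^ 2)).toNNReal : ℝ≥0∞)) := by
  rw [gaussianReal_of_var_ne_zero 0 (by norm_num)]
  congr 1
  funext x
  rw [gaussianPDF_def]
  have h : gaussianPDFReal 0 (1/2) x = (Real.sqrt π)⁻¹ * Real.exp (-x ^ 2) := by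
    rw [gaussianPDFReal_def]
    have h2 : ((1/2 : ℝ≥0) : ℝ) = 1/2 := by norm_num
    simp only [h2]
    rw [show 2 * π * (1/2 : ℝ) = π by ring, show (x - 0)^2 = x^2 by ring,
      show 2 * (1/2 : ℝ) = 1 by norm_num, div_one]
  show ENNReal.ofReal (gaussianPDFReal 0 (1/2) x) = _
  rw [h]
  rfl

lemma gauss_integral (g : ℝ → ℝ) :
    ∫ x, g x ∂(gaussianReal 0 (1/2)) = (Real.sqrt π)⁻¹ * ∫ x, g x * Real.exp (-x ^ 2) := by
  rw [gauss_half_eq, integral_withDensity_eq_integral_smul gdens_meas g, ← integral_const_mul]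
  congr 1; funext x
  rw [NNReal.smul_def, Real.coe_toNNReal _ (by positivity), smul_eq_mul]
  ring

lemma gauss_integrable {g : ℝ → ℝ} (h : Integrable (fun x => g x * Real.exp (-x ^ 2))) :
    Integrable g (gaussianReal 0 (1/2)) := by
  rw [gauss_half_eq, integrable_withDensity_iff_integrable_smul gdens_meas]
  refine (h.const_mul ((Real.sqrt π)⁻¹)).congr (ae_of_all _ fun x => ?_)
  show _ = ((Real.sqrt π)⁻¹ * Real.exp (-x ^ 2)).toNNReal • g x
  rw [NNReal.smul_def, Real.coe_toNNReal _ (by positivity), smul_eq_mul]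
  ring

lemma sqrt_pi_ne : Real.sqrt π ≠ 0 := by
  positivity

lemma gmom_int (k : ℕ) : Integrable (fun x : ℝ => x ^ k) (gaussianReal 0 (1/2)) :=
  gauss_integrable (aux_int k)

lemma gm1 : ∫ x, x ^ 1 ∂(gaussianReal 0 (1/2)) = 0 := by
  rw [gauss_integral, aux_odd 1 odd_one, mul_zero]

lemma gm3 : ∫ x, x ^ 3 ∂(gaussianReal 0 (1/2)) = 0 := by
  rw [gauss_integral, aux_odd 3 ⟨1, by norm_num⟩, mul_zero]

lemma gm2 : ∫ x, x ^ 2 ∂(gaussianReal 0 (1/2)) = 1/2 := by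
  rw [gauss_integral, gI2]
  field_simp

lemma gm4 : ∫ x, x ^ 4 ∂(gaussianReal 0 (1/2)) = 3/4 := by
  rw [gauss_integral, gI4]
  rw [show (Real.sqrt π)⁻¹ * (3 * Real.sqrt π / 4) = (3/4) * (Real.sqrt π / Real.sqrt π) by ring,
    div_self sqrt_pi_ne, mul_one]

section OmegaLevel

variable {Ω : Type*} [MeasureSpace Ω] [IsProbabilityMeasure (ℙ : Measure Ω)]
  {X : Ω → ℝ} (hXm : Measurable X) (hX : Measure.map X ℙ = gaussianReal 0 (1/2))

include hXm hX

lemma EXk (k : ℕ) : ∫ ω, X ω ^ k ∂ℙ = ∫ x, x ^ k ∂(gaussianReal 0 (1/2)) := by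
  rw [← hX]
  exact (integral_map hXm.aemeasurable (measurable_id.pow_const k).aestronglyMeasurable).symm

lemma IXk (k : ℕ) : Integrable (fun ω => X ω ^ k) ℙ := by
  have h := gmom_int k
  rw [← hX] at h
  exact (integrable_map_measure (measurable_id.pow_const k).aestronglyMeasurable
    hXm.aemeasurable).mp h

lemma poly4_integrable (a0 a1 a2 a3 a4 : ℝ) :
    Integrable (fun ω => a4 * X ω ^ 4 + a3 * X ω ^ 3 + a2 * X ω ^ 2 + a1 * X ω ^ 1 + a0) ℙ := by
  exact (((((IXk hXm hX 4).const_mul a4).add ((IXk hXm hX 3).const_mul a3)).add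
    ((IXk hXm hX 2).const_mul a2)).add ((IXk hXm hX 1).const_mul a1)).add (integrable_const a0)

lemma poly4_integral (a0 a1 a2 a3 a4 : ℝ) :
    ∫ ω, (a4 * X ω ^ 4 + a3 * X ω ^ 3 + a2 * X ω ^ 2 + a1 * X ω ^ 1 + a0) ∂ℙ
      = a4 * (3/4) + a2 * (1/2) + a0 := by
  have h4 : Integrable (fun ω => a4 * X ω ^ 4) ℙ := (IXk hXm hX 4).const_mul a4
  have h3 : Integrable (fun ω => a3 * X ω ^ 3) ℙ := (IXk hXm hX 3).const_mul a3
  have h2 : Integrable (fun ω => a2 * X ω ^ 2) ℙ := (IXk hXm hX 2).const_mul a2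
  have h1 : Integrable (fun ω => a1 * X ω ^ 1) ℙ := (IXk hXm hX 1).const_mul a1
  have h43 : Integrable (fun ω => a4 * X ω ^ 4 + a3 * X ω ^ 3) ℙ := h4.add h3
  have h432 : Integrable (fun ω => a4 * X ω ^ 4 + a3 * X ω ^ 3 + a2 * X ω ^ 2) ℙ := h43.add h2
  have h4321 : Integrable
      (fun ω => a4 * X ω ^ 4 + a3 * X ω ^ 3 + a2 * X ω ^ 2 + a1 * X ω ^ 1) ℙ := h432.add h1
  rw [integral_add h4321 (integrable_const a0), integral_add h432 h1, integral_add h43 h2,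
    integral_add h4 h3, integral_const_mul, integral_const_mul, integral_const_mul,
    integral_const_mul, EXk hXm hX 4, EXk hXm hX 3, EXk hXm hX 2, EXk hXm hX 1,
    gm1, gm2, gm3, gm4, integral_const]
  simp

end OmegaLevel

section Quad

variable {Ω : Type*} [MeasureSpace Ω] [IsProbabilityMeasure (ℙ : Measure Ω)]
  {X : Ω → ℝ} (hXm : Measurable X) (hX : Measure.map X ℙ = gaussianReal 0 (1/2)) (u v : ℝ)

include hXm hX

lemma quad_integrable : Integrable (fun ω => (u * X ω + v) ^ 2) ℙ := by
  have h := poly4_integrable hXm hX (v^2) (2*u*v) (u^2) 0 0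
  refine h.congr (ae_of_all _ fun ω => ?_)
  ring

lemma quad_sq_integrable : Integrable (fun ω => ((u * X ω + v) ^ 2) ^ 2) ℙ := by
  have h := poly4_integrable hXm hX (v^4) (4*u*v^3) (6*u^2*v^2) (4*u^3*v) (u^4)
  refine h.congr (ae_of_all _ fun ω => ?_)
  ring

lemma quad_memLp : MemLp (fun ω => (u * X ω + v) ^ 2) 2 ℙ := by
  refine (memLp_two_iff_integrable_sq ?_).mpr (quad_sq_integrable hXm hX u v)
  exact (((hXm.const_mul u).add_const v).pow_const 2).aestronglyMeasurable

lemma quad_expectation : ∫ ω, (u * X ω + v) ^ 2 ∂ℙ = u^2/2 + v^2 := by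
  have h : (fun ω => (u * X ω + v) ^ 2)
      = fun ω => u^2 * X ω ^ 4 * 0 + 0 * X ω ^ 3 + u^2 * X ω ^ 2 + (2*u*v) * X ω ^ 1 + v^2 := by
    funext ω; ring
  rw [show (∫ ω, (u * X ω + v) ^ 2 ∂ℙ)
      = ∫ ω, (0 * X ω ^ 4 + 0 * X ω ^ 3 + u^2 * X ω ^ 2 + (2*u*v) * X ω ^ 1 + v^2) ∂ℙ by
        congr 1; funext ω; ring,
    poly4_integral hXm hX]
  ring

lemma quad_expectation_sq : ∫ ω, ((u * X ω + v) ^ 2) ^ 2 ∂ℙ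
    = 3/4 * u^4 + 3 * u^2 * v^2 + v^4 := by
  rw [show (∫ ω, ((u * X ω + v) ^ 2) ^ 2 ∂ℙ)
      = ∫ ω, (u^4 * X ω ^ 4 + (4*u^3*v) * X ω ^ 3 + (6*u^2*v^2) * X ω ^ 2
          + (4*u*v^3) * X ω ^ 1 + v^4) ∂ℙ by
        congr 1; funext ω; ring,
    poly4_integral hXm hX]
  ring

lemma quad_variance : variance (fun ω => (u * X ω + v) ^ 2) ℙ = u^4/2 + 2*u^2*v^2 := by
  rw [variance_eq_sub (quad_memLp hXm hX u v)]
  simp only [Pi.pow_apply]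
  rw [quad_expectation_sq hXm hX u v, quad_expectation hXm hX u v]
  ring

end Quad

lemma variance_const_add' {Ω : Type*} [MeasureSpace Ω] [IsProbabilityMeasure (ℙ : Measure Ω)]
    (b : ℝ) (Z : Ω → ℝ) (hZ : Integrable Z ℙ) :
    variance (fun ω => b + Z ω) ℙ = variance Z ℙ := by
  have h : ∫ ω, (b + Z ω) ∂ℙ = b + ∫ ω, Z ω ∂ℙ := by
    rw [integral_add (integrable_const b) hZ, integral_const]
    simp
  rw [variance, variance, evariance, evariance]
  refine congrArg ENNReal.toReal (lintegral_congr fun ω => ?_)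
  rw [show (∫ ω, (fun ω => b + Z ω) ω ∂ℙ) = b + ∫ ω, Z ω ∂ℙ from h]
  norm_num

/-- For `c ≥ 0` and `W = A + iB` a standard circularly-symmetric complex
Gaussian (`A`, `B` independent real Gaussians of mean `0`, variance `1/2`),
`Var[(1 − |√c·W − 1|²/(1+c))·log₂ e] = (1 − 1/(1+c)²)·(log₂ e)²`. -/
theorem variance_information_density_term
    {Ω : Type*} [MeasureSpace Ω] [IsProbabilityMeasure (ℙ : Measure Ω)]
    (A B : Ω → ℝ) (hAm : Measurable A) (hBm : Measurable B)
    (hA : Measure.map A ℙ = gaussianReal 0 (1/2))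
    (hB : Measure.map B ℙ = gaussianReal 0 (1/2))
    (hAB : IndepFun A B ℙ)
    (c : ℝ) (hc : 0 ≤ c) :
    variance (fun ω =>
        (1 - ‖(Real.sqrt c : ℂ) * ((A ω : ℂ) + (B ω : ℂ) * Complex.I) - 1‖ ^ 2
            / (1 + c)) * Real.logb 2 (Real.exp 1)) ℙ
      = (1 - 1 / (1 + c) ^ 2) * (Real.logb 2 (Real.exp 1)) ^ 2 := by
  set L := Real.logb 2 (Real.exp 1) with hL
  set s := Real.sqrt c with hs
  have hs2 : s ^ 2 = c := Real.sq_sqrt hc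
  have h1c : (0:ℝ) < 1 + c := by linarith
  have habs : ∀ a b : ℝ,
      ‖(s : ℂ) * ((a : ℂ) + (b : ℂ) * Complex.I) - 1‖ ^ 2
        = (s * a + (-1)) ^ 2 + (s * b + 0) ^ 2 := by
    intro a b
    rw [show (s : ℂ) * ((a : ℂ) + (b : ℂ) * Complex.I) - 1
        = ((s * a - 1 : ℝ) : ℂ) + ((s * b : ℝ) : ℂ) * Complex.I by push_cast; ring]
    rw [Complex.sq_norm, Complex.normSq_add_mul_I]
    ring
  have hfun : (fun ω =>
        (1 - ‖(s : ℂ) * ((A ω : ℂ) + (B ω : ℂ) * Complex.I) - 1‖ ^ 2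
            / (1 + c)) * L)
      = fun ω => L + (-(L / (1 + c)))
          * ((fun ω => (s * A ω + (-1)) ^ 2) ω + (fun ω => (s * B ω + 0) ^ 2) ω) := by
    funext ω
    rw [habs (A ω) (B ω)]
    simp only
    field_simp
    ring
  rw [hfun]
  have hP2 : MemLp (fun ω => (s * A ω + (-1)) ^ 2) 2 ℙ := quad_memLp hAm hA s (-1)
  have hQ2 : MemLp (fun ω => (s * B ω + 0) ^ 2) 2 ℙ := quad_memLp hBm hB s 0
  have hPQind : IndepFun (fun ω => (s * A ω + (-1)) ^ 2) (fun ω => (s * B ω + 0) ^ 2) ℙ := by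
    exact hAB.comp (((measurable_id.const_mul s).add_const (-1)).pow_const 2)
      (((measurable_id.const_mul s).add_const 0).pow_const 2)
  have hZint : Integrable (fun ω =>
      (-(L / (1 + c))) * ((fun ω => (s * A ω + (-1)) ^ 2) ω + (fun ω => (s * B ω + 0) ^ 2) ω)) ℙ :=
    ((quad_integrable hAm hA s (-1)).add (quad_integrable hBm hB s 0)).const_mul _
  rw [variance_const_add' _ _ hZint, variance_const_mul,
    show (fun ω => (fun ω => (s * A ω + (-1)) ^ 2) ω + (fun ω => (s * B ω + 0) ^ 2) ω)
      = (fun ω => (s * A ω + (-1)) ^ 2) + (fun ω => (s * B ω + 0) ^ 2) from rfl,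
    hPQind.variance_add hP2 hQ2,
    quad_variance hAm hA s (-1), quad_variance hBm hB s 0]
  rw [show c = s ^ 2 from hs2.symm]
  have h1s : (1:ℝ) + s ^ 2 ≠ 0 := by nlinarith [sq_nonneg s]
  field_simp
  ring
end

section
/- Fix positive integers m and n and reals c₁,…,c_m ≥ 0. Let (W_{i,j}), for 1 ≤ i ≤ m and 1 ≤ j ≤ n, be independent standard circularly-symmetric complex Gaussian random variables. Define the information density S = Σ_{j=1}^{n} Σ_{i=1}^{m} [ log₂(1+cᵢ) + (1 − |√cᵢ·W_{i,j} − 1|²/(1+cᵢ))·log₂ e ]. Then E[S] = n·Σ_{i=1}^{m} log₂(1+cᵢ) and Var[S] = n·Σ_{i=1}^{m} (1 − 1/(1+cᵢ)²)·(log₂ e)². -/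
open MeasureTheory ProbabilityTheory

/-- The law of a standard circularly-symmetric complex Gaussian random variable
`W = A + iB`, with `A`, `B` independent real Gaussians of mean `0` and variance `1/2`. -/
noncomputable def stdComplexGaussian : Measure ℂ :=
  Measure.map (fun p : ℝ × ℝ => (p.1 : ℂ) + (p.2 : ℂ) * Complex.I)
    ((gaussianReal 0 (1/2)).prod (gaussianReal 0 (1/2)))

namespace InfoAux

open Real Set
open scoped ENNReal NNReal

lemma pow_le_factorial_mul_exp (k : ℕ) {t : ℝ} (ht : 0 ≤ t) :
    t ^ k ≤ k.factorial * Real.exp t := by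
  have h1 : t ^ k / k.factorial ≤ Real.exp t := by
    calc t ^ k / k.factorial ≤ ∑ i ∈ Finset.range (k + 1), t ^ i / i.factorial := by
          refine Finset.single_le_sum (f := fun i => t ^ i / i.factorial) ?_ ?_
          · intro i _; positivity
          · simp
      _ ≤ Real.exp t := Real.sum_le_exp_of_nonneg ht _
  have hk : (0:ℝ) < k.factorial := by positivity
  calc t ^ k = k.factorial * (t ^ k / k.factorial) := by field_simp
    _ ≤ k.factorial * Real.exp t := by
        exact mul_le_mul_of_nonneg_left h1 hk.le

lemma integrable_pow_mul_exp (k : ℕ) :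
    Integrable (fun x : ℝ => x ^ k * Real.exp (-x ^ 2)) := by
  have hmaj : Integrable (fun x : ℝ =>
      (k.factorial * Real.exp (1/2)) * Real.exp (-(1/2) * x ^ 2)) :=
    (integrable_exp_neg_mul_sq (by norm_num : (0:ℝ) < 1/2)).const_mul _
  refine hmaj.mono' ?_ ?_
  · exact (continuous_pow k).mul (continuous_exp.comp (continuous_pow 2).neg)
      |>.aestronglyMeasurable
  · refine Filter.Eventually.of_forall fun x => ?_
    have h1 : |x| ^ k ≤ k.factorial * Real.exp |x| :=
      pow_le_factorial_mul_exp k (abs_nonneg x)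
    have h2 : Real.exp |x| * Real.exp (-x ^ 2)
        ≤ Real.exp (1/2) * Real.exp (-(1/2) * x ^ 2) := by
      rw [← Real.exp_add, ← Real.exp_add]
      apply Real.exp_le_exp.2
      nlinarith [sq_nonneg (|x| - 1), sq_abs x]
    have hnorm : ‖x ^ k * Real.exp (-x ^ 2)‖ = |x| ^ k * Real.exp (-x ^ 2) := by
      rw [norm_mul, norm_pow, Real.norm_eq_abs, Real.norm_eq_abs,
        abs_of_pos (Real.exp_pos _)]
    rw [hnorm]
    calc |x| ^ k * Real.exp (-x ^ 2)
        ≤ (k.factorial * Real.exp |x|) * Real.exp (-x ^ 2) := by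
          exact mul_le_mul_of_nonneg_right h1 (Real.exp_pos _).le
      _ = k.factorial * (Real.exp |x| * Real.exp (-x ^ 2)) := by ring
      _ ≤ k.factorial * (Real.exp (1/2) * Real.exp (-(1/2) * x ^ 2)) := by
          exact mul_le_mul_of_nonneg_left h2 (by positivity)
      _ = (k.factorial * Real.exp (1/2)) * Real.exp (-(1/2) * x ^ 2) := by ring

lemma integral_pow_mul_exp_odd (k : ℕ) (hk : Odd k) :
    ∫ x : ℝ, x ^ k * Real.exp (-x ^ 2) = 0 := by
  have h := MeasureTheory.integral_neg_eq_self
    (fun x : ℝ => x ^ k * Real.exp (-x ^ 2)) (volume : Measure ℝ)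
  have h2 : ∀ x : ℝ, (-x) ^ k * Real.exp (-(-x) ^ 2) = -(x ^ k * Real.exp (-x ^ 2)) := by
    intro x
    rw [hk.neg_pow, neg_sq]
    ring
  simp_rw [h2, integral_neg] at h
  linarith

lemma integral_Ioi_pow_mul_exp (k : ℕ) :
    ∫ x in Ioi (0:ℝ), x ^ k * Real.exp (-x ^ 2)
      = (1 / 2) * Real.Gamma ((k + 1) / 2) := by
  rw [← integral_rpow_mul_exp_neg_rpow (by norm_num : (0:ℝ) < 2)
    (lt_of_lt_of_le (by norm_num) (Nat.cast_nonneg k))]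
  refine setIntegral_congr_fun measurableSet_Ioi fun x hx => ?_
  have hx0 : (0:ℝ) ≤ x := (le_of_lt hx)
  rw [← Real.rpow_natCast x k, ← Real.rpow_natCast x 2]
  norm_num

lemma integral_pow_mul_exp_even (k : ℕ) (hk : Even k) :
    ∫ x : ℝ, x ^ k * Real.exp (-x ^ 2) = Real.Gamma ((k + 1) / 2) := by
  have hint := integrable_pow_mul_exp k
  have hsplit := intervalIntegral.integral_Iic_add_Ioi (b := (0:ℝ)) (μ := volume)
    (f := fun x : ℝ => x ^ k * Real.exp (-x ^ 2)) hint.integrableOn hint.integrableOn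
  have hneg : ∫ x in Iic (0:ℝ), x ^ k * Real.exp (-x ^ 2)
      = ∫ x in Ioi (0:ℝ), x ^ k * Real.exp (-x ^ 2) := by
    have h := integral_comp_neg_Ioi (0:ℝ) (fun x : ℝ => x ^ k * Real.exp (-x ^ 2))
    simp only [hk.neg_pow, neg_sq, neg_zero] at h
    exact h.symm
  rw [hneg, integral_Ioi_pow_mul_exp] at hsplit
  rw [← hsplit]; ring

lemma Gamma_three_halves : Real.Gamma (3 / 2) = Real.sqrt π / 2 := by
  have h := Real.Gamma_add_one (by norm_num : (1/2 : ℝ) ≠ 0)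
  rw [show (1/2 : ℝ) + 1 = 3/2 by norm_num, Real.Gamma_one_half_eq] at h
  rw [h]; ring

lemma Gamma_five_halves : Real.Gamma (5 / 2) = 3 * Real.sqrt π / 4 := by
  have h := Real.Gamma_add_one (by norm_num : (3/2 : ℝ) ≠ 0)
  rw [show (3/2 : ℝ) + 1 = 5/2 by norm_num, Gamma_three_halves] at h
  rw [h]; ring

lemma J0 : ∫ x : ℝ, Real.exp (-x ^ 2) = Real.sqrt π := by
  simpa using integral_gaussian 1

lemma J2 : ∫ x : ℝ, x ^ 2 * Real.exp (-x ^ 2) = Real.sqrt π / 2 := by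
  have := integral_pow_mul_exp_even 2 (by norm_num)
  rw [this]; norm_num [Gamma_three_halves]

lemma J4 : ∫ x : ℝ, x ^ 4 * Real.exp (-x ^ 2) = 3 * Real.sqrt π / 4 := by
  have := integral_pow_mul_exp_even 4 (by decide)
  rw [this]; norm_num [Gamma_five_halves]


/-! ### Moments of the gaussian measure with mean 0 variance 1/2 -/

noncomputable def μg : Measure ℝ := gaussianReal 0 (1/2)

instance : IsProbabilityMeasure μg := by unfold μg; infer_instance

lemma pdf_eq (x : ℝ) :
    gaussianPDFReal 0 (1/2) x = (Real.sqrt π)⁻¹ * Real.exp (-x ^ 2) := by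
  rw [gaussianPDFReal]
  have h1 : (2 * π * ((1/2 : ℝ≥0) : ℝ)) = π := by push_cast; ring
  have h2 : -(x - 0) ^ 2 / (2 * ((1/2 : ℝ≥0) : ℝ)) = -x ^ 2 := by push_cast; ring
  rw [h1, h2]

lemma meas_pdf : Measurable fun x : ℝ => (gaussianPDFReal 0 (1/2) x).toNNReal :=
  (measurable_gaussianPDFReal 0 (1/2)).real_toNNReal

lemma μg_eq : μg = volume.withDensity fun x =>
    ((gaussianPDFReal 0 (1/2) x).toNNReal : ℝ≥0∞) := by
  rw [μg, gaussianReal_of_var_ne_zero 0 (by norm_num)]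
  congr 1

lemma integral_μg (g : ℝ → ℝ) :
    ∫ x, g x ∂μg = ∫ x, (Real.sqrt π)⁻¹ * Real.exp (-x ^ 2) * g x := by
  rw [μg_eq, integral_withDensity_eq_integral_smul meas_pdf]
  refine integral_congr_ae (Filter.Eventually.of_forall fun x => ?_)
  simp only [NNReal.smul_def, smul_eq_mul,
    Real.coe_toNNReal _ (gaussianPDFReal_nonneg 0 (1/2) x), pdf_eq,
      Real.coe_toNNReal _ (by positivity : (0:ℝ) ≤ (Real.sqrt π)⁻¹ * Real.exp (-x ^ 2))]

lemma integrable_μg_iff (g : ℝ → ℝ) :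
    Integrable g μg ↔ Integrable (fun x => (Real.sqrt π)⁻¹ * Real.exp (-x ^ 2) * g x) := by
  rw [μg_eq, integrable_withDensity_iff_integrable_smul meas_pdf]
  constructor <;> intro h <;> refine h.congr (Filter.Eventually.of_forall fun x => ?_) <;>
    simp only [NNReal.smul_def, smul_eq_mul,
      Real.coe_toNNReal _ (gaussianPDFReal_nonneg 0 (1/2) x), pdf_eq,
      Real.coe_toNNReal _ (by positivity : (0:ℝ) ≤ (Real.sqrt π)⁻¹ * Real.exp (-x ^ 2))]

lemma integrable_pow_μg (k : ℕ) : Integrable (fun x : ℝ => x ^ k) μg := by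
  rw [integrable_μg_iff]
  have h := (integrable_pow_mul_exp k).const_mul (Real.sqrt π)⁻¹
  refine h.congr (Filter.Eventually.of_forall fun x => ?_)
  ring

lemma sqrt_pi_ne : Real.sqrt π ≠ 0 := by
  positivity

lemma integral_pow_μg (k : ℕ) :
    ∫ x, x ^ k ∂μg = (Real.sqrt π)⁻¹ * ∫ x, x ^ k * Real.exp (-x ^ 2) := by
  rw [integral_μg, ← integral_const_mul]
  refine integral_congr_ae (Filter.Eventually.of_forall fun x => ?_)
  ring

lemma M0 : ∫ x, x ^ 0 ∂μg = 1 := by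
  rw [integral_pow_μg]
  simp only [pow_zero, one_mul]
  rw [J0, inv_mul_cancel₀ sqrt_pi_ne]

lemma M1 : ∫ x, x ^ 1 ∂μg = 0 := by
  rw [integral_pow_μg, integral_pow_mul_exp_odd 1 (by decide), mul_zero]

lemma M2 : ∫ x, x ^ 2 ∂μg = 1 / 2 := by
  rw [integral_pow_μg, J2]
  field_simp

lemma M3 : ∫ x, x ^ 3 ∂μg = 0 := by
  rw [integral_pow_μg, integral_pow_mul_exp_odd 3 (by decide), mul_zero]

lemma M4 : ∫ x, x ^ 4 ∂μg = 3 / 4 := by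
  rw [integral_pow_μg, J4]
  rw [inv_mul_eq_div]
  rw [div_eq_iff sqrt_pi_ne]
  ring


/-! ### Product measure and moments of the quadratic form -/

noncomputable def νg : Measure (ℝ × ℝ) := Measure.prod μg μg

instance : IsProbabilityMeasure νg := by unfold νg; infer_instance

lemma integrable_mono (i j : ℕ) :
    Integrable (fun p : ℝ × ℝ => p.1 ^ i * p.2 ^ j) νg :=
  (integrable_pow_μg i).mul_prod (integrable_pow_μg j)

lemma integral_mono (i j : ℕ) :
    ∫ p, p.1 ^ i * p.2 ^ j ∂νg = (∫ x, x ^ i ∂μg) * ∫ x, x ^ j ∂μg :=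
  integral_prod_mul (μ := μg) (ν := μg) (fun x => x ^ i) (fun x => x ^ j)

lemma integral_add4 {α : Type*} [MeasurableSpace α] {μ : Measure α} {f1 f2 f3 f4 : α → ℝ}
    (h1 : Integrable f1 μ) (h2 : Integrable f2 μ) (h3 : Integrable f3 μ)
    (h4 : Integrable f4 μ) :
    ∫ x, (f1 x + f2 x + f3 x + f4 x) ∂μ
      = (∫ x, f1 x ∂μ) + (∫ x, f2 x ∂μ) + (∫ x, f3 x ∂μ) + ∫ x, f4 x ∂μ := by
  have h12 : Integrable (fun x => f1 x + f2 x) μ := h1.add h2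
  have h123 : Integrable (fun x => f1 x + f2 x + f3 x) μ := h12.add h3
  rw [integral_add h123 h4, integral_add h12 h3, integral_add h1 h2]

lemma integral_add9 {α : Type*} [MeasurableSpace α] {μ : Measure α}
    {f1 f2 f3 f4 f5 f6 f7 f8 f9 : α → ℝ}
    (h1 : Integrable f1 μ) (h2 : Integrable f2 μ) (h3 : Integrable f3 μ)
    (h4 : Integrable f4 μ) (h5 : Integrable f5 μ) (h6 : Integrable f6 μ)
    (h7 : Integrable f7 μ) (h8 : Integrable f8 μ) (h9 : Integrable f9 μ) :
    ∫ x, (f1 x + f2 x + f3 x + f4 x + f5 x + f6 x + f7 x + f8 x + f9 x) ∂μ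
      = (∫ x, f1 x ∂μ) + (∫ x, f2 x ∂μ) + (∫ x, f3 x ∂μ) + (∫ x, f4 x ∂μ)
        + (∫ x, f5 x ∂μ) + (∫ x, f6 x ∂μ) + (∫ x, f7 x ∂μ) + (∫ x, f8 x ∂μ)
        + ∫ x, f9 x ∂μ := by
  have g2 : Integrable (fun x => f1 x + f2 x) μ := h1.add h2
  have g3 : Integrable (fun x => f1 x + f2 x + f3 x) μ := g2.add h3
  have g4 : Integrable (fun x => f1 x + f2 x + f3 x + f4 x) μ := g3.add h4
  have g5 : Integrable (fun x => f1 x + f2 x + f3 x + f4 x + f5 x) μ := g4.add h5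
  have g6 : Integrable (fun x => f1 x + f2 x + f3 x + f4 x + f5 x + f6 x) μ := g5.add h6
  have g7 : Integrable (fun x => f1 x + f2 x + f3 x + f4 x + f5 x + f6 x + f7 x) μ := g6.add h7
  have g8 : Integrable (fun x => f1 x + f2 x + f3 x + f4 x + f5 x + f6 x + f7 x + f8 x) μ :=
    g7.add h8
  rw [integral_add g8 h9, integral_add g7 h8, integral_add g6 h7, integral_add g5 h6,
    integral_add g4 h5, integral_add g3 h4, integral_add g2 h3, integral_add h1 h2]

/-- The quadratic form `|d(a+bi) - 1|²` as a polynomial on `ℝ × ℝ`. -/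
def qf (d : ℝ) (p : ℝ × ℝ) : ℝ :=
  d ^ 2 * p.1 ^ 2 - 2 * d * p.1 + 1 + d ^ 2 * p.2 ^ 2

lemma integrable_qf (d : ℝ) : Integrable (fun p => qf d p) νg := by
  have h1 : Integrable (fun p : ℝ × ℝ => d ^ 2 * (p.1 ^ 2 * p.2 ^ 0)) νg := (integrable_mono 2 0).const_mul _
  have h2 : Integrable (fun p : ℝ × ℝ => (-2 * d) * (p.1 ^ 1 * p.2 ^ 0)) νg := (integrable_mono 1 0).const_mul _
  have h3 : Integrable (fun p : ℝ × ℝ => (1 : ℝ) * (p.1 ^ 0 * p.2 ^ 0)) νg := (integrable_mono 0 0).const_mul _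
  have h4 : Integrable (fun p : ℝ × ℝ => d ^ 2 * (p.1 ^ 0 * p.2 ^ 2)) νg := (integrable_mono 0 2).const_mul _
  have e : (fun p : ℝ × ℝ => qf d p) = fun p : ℝ × ℝ => d ^ 2 * (p.1 ^ 2 * p.2 ^ 0) + (-2 * d) * (p.1 ^ 1 * p.2 ^ 0) + (1 : ℝ) * (p.1 ^ 0 * p.2 ^ 0) + d ^ 2 * (p.1 ^ 0 * p.2 ^ 2) := by
    funext p; simp only [qf]; ring
  rw [e]
  exact (((h1.add h2).add h3).add h4)

lemma integral_qf (d : ℝ) : ∫ p, qf d p ∂νg = 1 + d ^ 2 := by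
  have h1 : Integrable (fun p : ℝ × ℝ => d ^ 2 * (p.1 ^ 2 * p.2 ^ 0)) νg := (integrable_mono 2 0).const_mul _
  have h2 : Integrable (fun p : ℝ × ℝ => (-2 * d) * (p.1 ^ 1 * p.2 ^ 0)) νg := (integrable_mono 1 0).const_mul _
  have h3 : Integrable (fun p : ℝ × ℝ => (1 : ℝ) * (p.1 ^ 0 * p.2 ^ 0)) νg := (integrable_mono 0 0).const_mul _
  have h4 : Integrable (fun p : ℝ × ℝ => d ^ 2 * (p.1 ^ 0 * p.2 ^ 2)) νg := (integrable_mono 0 2).const_mul _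
  have e : (fun p : ℝ × ℝ => qf d p) = fun p : ℝ × ℝ => d ^ 2 * (p.1 ^ 2 * p.2 ^ 0) + (-2 * d) * (p.1 ^ 1 * p.2 ^ 0) + (1 : ℝ) * (p.1 ^ 0 * p.2 ^ 0) + d ^ 2 * (p.1 ^ 0 * p.2 ^ 2) := by
    funext p; simp only [qf]; ring
  calc ∫ p, qf d p ∂νg = ∫ p, (d ^ 2 * (p.1 ^ 2 * p.2 ^ 0) + (-2 * d) * (p.1 ^ 1 * p.2 ^ 0) + (1 : ℝ) * (p.1 ^ 0 * p.2 ^ 0) + d ^ 2 * (p.1 ^ 0 * p.2 ^ 2)) ∂νg := by rw [e]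
    _ = 1 + d ^ 2 := by
        rw [integral_add4 h1 h2 h3 h4]
        simp only [integral_const_mul, integral_mono 0 0, integral_mono 0 2, integral_mono 1 0, integral_mono 2 0, M0, M1, M2, M3, M4]
        ring

lemma integrable_qf_sq (d : ℝ) : Integrable (fun p => qf d p ^ 2) νg := by
  have h1 : Integrable (fun p : ℝ × ℝ => d ^ 4 * (p.1 ^ 4 * p.2 ^ 0)) νg := (integrable_mono 4 0).const_mul _
  have h2 : Integrable (fun p : ℝ × ℝ => (-4 * d ^ 3) * (p.1 ^ 3 * p.2 ^ 0)) νg := (integrable_mono 3 0).const_mul _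
  have h3 : Integrable (fun p : ℝ × ℝ => (6 * d ^ 2) * (p.1 ^ 2 * p.2 ^ 0)) νg := (integrable_mono 2 0).const_mul _
  have h4 : Integrable (fun p : ℝ × ℝ => (-4 * d) * (p.1 ^ 1 * p.2 ^ 0)) νg := (integrable_mono 1 0).const_mul _
  have h5 : Integrable (fun p : ℝ × ℝ => (1 : ℝ) * (p.1 ^ 0 * p.2 ^ 0)) νg := (integrable_mono 0 0).const_mul _
  have h6 : Integrable (fun p : ℝ × ℝ => d ^ 4 * (p.1 ^ 0 * p.2 ^ 4)) νg := (integrable_mono 0 4).const_mul _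
  have h7 : Integrable (fun p : ℝ × ℝ => (2 * d ^ 4) * (p.1 ^ 2 * p.2 ^ 2)) νg := (integrable_mono 2 2).const_mul _
  have h8 : Integrable (fun p : ℝ × ℝ => (-4 * d ^ 3) * (p.1 ^ 1 * p.2 ^ 2)) νg := (integrable_mono 1 2).const_mul _
  have h9 : Integrable (fun p : ℝ × ℝ => (2 * d ^ 2) * (p.1 ^ 0 * p.2 ^ 2)) νg := (integrable_mono 0 2).const_mul _
  have e : (fun p : ℝ × ℝ => qf d p ^ 2) = fun p : ℝ × ℝ => d ^ 4 * (p.1 ^ 4 * p.2 ^ 0) + (-4 * d ^ 3) * (p.1 ^ 3 * p.2 ^ 0) + (6 * d ^ 2) * (p.1 ^ 2 * p.2 ^ 0) + (-4 * d) * (p.1 ^ 1 * p.2 ^ 0) + (1 : ℝ) * (p.1 ^ 0 * p.2 ^ 0) + d ^ 4 * (p.1 ^ 0 * p.2 ^ 4) + (2 * d ^ 4) * (p.1 ^ 2 * p.2 ^ 2) + (-4 * d ^ 3) * (p.1 ^ 1 * p.2 ^ 2) + (2 * d ^ 2) * (p.1 ^ 0 * p.2 ^ 2) := by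
    funext p; simp only [qf]; ring
  rw [e]
  exact ((((((((h1.add h2).add h3).add h4).add h5).add h6).add h7).add h8).add h9)

lemma integral_qf_sq (d : ℝ) : ∫ p, qf d p ^ 2 ∂νg = 2 * d ^ 4 + 4 * d ^ 2 + 1 := by
  have h1 : Integrable (fun p : ℝ × ℝ => d ^ 4 * (p.1 ^ 4 * p.2 ^ 0)) νg := (integrable_mono 4 0).const_mul _
  have h2 : Integrable (fun p : ℝ × ℝ => (-4 * d ^ 3) * (p.1 ^ 3 * p.2 ^ 0)) νg := (integrable_mono 3 0).const_mul _
  have h3 : Integrable (fun p : ℝ × ℝ => (6 * d ^ 2) * (p.1 ^ 2 * p.2 ^ 0)) νg := (integrable_mono 2 0).const_mul _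
  have h4 : Integrable (fun p : ℝ × ℝ => (-4 * d) * (p.1 ^ 1 * p.2 ^ 0)) νg := (integrable_mono 1 0).const_mul _
  have h5 : Integrable (fun p : ℝ × ℝ => (1 : ℝ) * (p.1 ^ 0 * p.2 ^ 0)) νg := (integrable_mono 0 0).const_mul _
  have h6 : Integrable (fun p : ℝ × ℝ => d ^ 4 * (p.1 ^ 0 * p.2 ^ 4)) νg := (integrable_mono 0 4).const_mul _
  have h7 : Integrable (fun p : ℝ × ℝ => (2 * d ^ 4) * (p.1 ^ 2 * p.2 ^ 2)) νg := (integrable_mono 2 2).const_mul _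
  have h8 : Integrable (fun p : ℝ × ℝ => (-4 * d ^ 3) * (p.1 ^ 1 * p.2 ^ 2)) νg := (integrable_mono 1 2).const_mul _
  have h9 : Integrable (fun p : ℝ × ℝ => (2 * d ^ 2) * (p.1 ^ 0 * p.2 ^ 2)) νg := (integrable_mono 0 2).const_mul _
  have e : (fun p : ℝ × ℝ => qf d p ^ 2) = fun p : ℝ × ℝ => d ^ 4 * (p.1 ^ 4 * p.2 ^ 0) + (-4 * d ^ 3) * (p.1 ^ 3 * p.2 ^ 0) + (6 * d ^ 2) * (p.1 ^ 2 * p.2 ^ 0) + (-4 * d) * (p.1 ^ 1 * p.2 ^ 0) + (1 : ℝ) * (p.1 ^ 0 * p.2 ^ 0) + d ^ 4 * (p.1 ^ 0 * p.2 ^ 4) + (2 * d ^ 4) * (p.1 ^ 2 * p.2 ^ 2) + (-4 * d ^ 3) * (p.1 ^ 1 * p.2 ^ 2) + (2 * d ^ 2) * (p.1 ^ 0 * p.2 ^ 2) := by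
    funext p; simp only [qf]; ring
  calc ∫ p, qf d p ^ 2 ∂νg = ∫ p, (d ^ 4 * (p.1 ^ 4 * p.2 ^ 0) + (-4 * d ^ 3) * (p.1 ^ 3 * p.2 ^ 0) + (6 * d ^ 2) * (p.1 ^ 2 * p.2 ^ 0) + (-4 * d) * (p.1 ^ 1 * p.2 ^ 0) + (1 : ℝ) * (p.1 ^ 0 * p.2 ^ 0) + d ^ 4 * (p.1 ^ 0 * p.2 ^ 4) + (2 * d ^ 4) * (p.1 ^ 2 * p.2 ^ 2) + (-4 * d ^ 3) * (p.1 ^ 1 * p.2 ^ 2) + (2 * d ^ 2) * (p.1 ^ 0 * p.2 ^ 2)) ∂νg := by rw [e]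
    _ = 2 * d ^ 4 + 4 * d ^ 2 + 1 := by
        rw [integral_add9 h1 h2 h3 h4 h5 h6 h7 h8 h9]
        simp only [integral_const_mul, integral_mono 0 0, integral_mono 0 2, integral_mono 0 4, integral_mono 1 0, integral_mono 1 2, integral_mono 2 0, integral_mono 2 2, integral_mono 3 0, integral_mono 4 0, M0, M1, M2, M3, M4]
        ring

/-! ### The standard complex Gaussian -/

def φc (p : ℝ × ℝ) : ℂ := (p.1 : ℂ) + (p.2 : ℂ) * Complex.I

lemma measurable_φc : Measurable φc :=
  (Complex.measurable_ofReal.comp measurable_fst).add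
    ((Complex.measurable_ofReal.comp measurable_snd).mul_const _)

noncomputable def gfun (c : ℝ) (w : ℂ) : ℝ :=
  Real.logb 2 (1 + c)
    + (1 - ‖(Real.sqrt c : ℂ) * w - 1‖ ^ 2 / (1 + c)) * Real.logb 2 (Real.exp 1)

lemma continuous_gfun (c : ℝ) : Continuous (gfun c) := by
  have h : Continuous fun w : ℂ => ‖(Real.sqrt c : ℂ) * w - 1‖ :=
    continuous_norm.comp ((continuous_const.mul continuous_id).sub continuous_const)
  exact continuous_const.add ((continuous_const.sub ((h.pow 2).div_const _)).mul
    continuous_const)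

lemma abs_sq_eq (d a b : ℝ) :
    ‖(d : ℂ) * ((a : ℂ) + (b : ℂ) * Complex.I) - 1‖ ^ 2
      = (d * a - 1) ^ 2 + (d * b) ^ 2 := by
  rw [Complex.sq_norm]
  simp [Complex.normSq_apply]
  ring

lemma gfun_comp (c : ℝ) (p : ℝ × ℝ) :
    gfun c (φc p) = (Real.logb 2 (1 + c) + Real.logb 2 (Real.exp 1))
      + (-(Real.logb 2 (Real.exp 1) / (1 + c))) * qf (Real.sqrt c) p := by
  unfold gfun φc
  rw [abs_sq_eq]
  simp only [qf]
  ring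

lemma std_eq : stdComplexGaussian = Measure.map φc νg := rfl

lemma integrable_gfun_ν (c : ℝ) : Integrable (fun p => gfun c (φc p)) νg := by
  have e : (fun p => gfun c (φc p)) = fun p =>
      (Real.logb 2 (1 + c) + Real.logb 2 (Real.exp 1))
        + (-(Real.logb 2 (Real.exp 1) / (1 + c))) * qf (Real.sqrt c) p :=
    funext (gfun_comp c)
  rw [e]
  exact (integrable_const _).add ((integrable_qf _).const_mul _)

lemma integrable_gfun_sq_ν (c : ℝ) : Integrable (fun p => gfun c (φc p) ^ 2) νg := by
  have e : (fun p => gfun c (φc p) ^ 2) = fun p =>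
      ((Real.logb 2 (1 + c) + Real.logb 2 (Real.exp 1)) ^ 2
        + (2 * (Real.logb 2 (1 + c) + Real.logb 2 (Real.exp 1))
            * (-(Real.logb 2 (Real.exp 1) / (1 + c)))) * qf (Real.sqrt c) p)
        + (-(Real.logb 2 (Real.exp 1) / (1 + c))) ^ 2 * qf (Real.sqrt c) p ^ 2 := by
    funext p
    rw [gfun_comp c p]
    ring
  rw [e]
  exact ((integrable_const _).add ((integrable_qf _).const_mul _)).add
    ((integrable_qf_sq _).const_mul _)

lemma integrable_gfun_std {c : ℝ} : Integrable (gfun c) stdComplexGaussian := by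
  rw [std_eq, integrable_map_measure (continuous_gfun c).aestronglyMeasurable
    measurable_φc.aemeasurable]
  exact integrable_gfun_ν c

lemma integrable_gfun_sq_std {c : ℝ} :
    Integrable (fun w => gfun c w ^ 2) stdComplexGaussian := by
  rw [std_eq, integrable_map_measure (Continuous.aestronglyMeasurable (f := fun w => gfun c w ^ 2) ((continuous_gfun c).pow 2))
    measurable_φc.aemeasurable]
  exact integrable_gfun_sq_ν c

lemma integral_gfun_std {c : ℝ} (hc : 0 ≤ c) :
    ∫ w, gfun c w ∂stdComplexGaussian = Real.logb 2 (1 + c) := by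
  have h1c : (1 : ℝ) + c ≠ 0 := by positivity
  rw [std_eq, integral_map measurable_φc.aemeasurable
    (continuous_gfun c).aestronglyMeasurable]
  have e : (fun p => gfun c (φc p)) = fun p =>
      (Real.logb 2 (1 + c) + Real.logb 2 (Real.exp 1))
        + (-(Real.logb 2 (Real.exp 1) / (1 + c))) * qf (Real.sqrt c) p :=
    funext (gfun_comp c)
  rw [e, integral_add (integrable_const _) ((integrable_qf _).const_mul _),
    integral_const, integral_const_mul, integral_qf, Real.sq_sqrt hc]
  simp only [probReal_univ, measure_univ, ENNReal.toReal_one, smul_eq_mul, one_mul]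
  field_simp
  ring

lemma integral_gfun_sq_std {c : ℝ} (hc : 0 ≤ c) :
    ∫ w, gfun c w ^ 2 ∂stdComplexGaussian
      = Real.logb 2 (1 + c) ^ 2
        + (1 - 1 / (1 + c) ^ 2) * Real.logb 2 (Real.exp 1) ^ 2 := by
  have h1c : (1 : ℝ) + c ≠ 0 := by positivity
  rw [std_eq, integral_map measurable_φc.aemeasurable
    (Continuous.aestronglyMeasurable (f := fun w => gfun c w ^ 2) ((continuous_gfun c).pow 2))]
  have e : (fun p => gfun c (φc p) ^ 2) = fun p =>
      ((Real.logb 2 (1 + c) + Real.logb 2 (Real.exp 1)) ^ 2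
        + (2 * (Real.logb 2 (1 + c) + Real.logb 2 (Real.exp 1))
            * (-(Real.logb 2 (Real.exp 1) / (1 + c)))) * qf (Real.sqrt c) p)
        + (-(Real.logb 2 (Real.exp 1) / (1 + c))) ^ 2 * qf (Real.sqrt c) p ^ 2 := by
    funext p
    rw [gfun_comp c p]
    ring
  have h4 : Real.sqrt c ^ 4 = c ^ 2 := by
    rw [show (4 : ℕ) = 2 * 2 from rfl, pow_mul, Real.sq_sqrt hc]
  have ha : Integrable (fun p => (Real.logb 2 (1 + c) + Real.logb 2 (Real.exp 1)) ^ 2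
      + (2 * (Real.logb 2 (1 + c) + Real.logb 2 (Real.exp 1))
          * (-(Real.logb 2 (Real.exp 1) / (1 + c)))) * qf (Real.sqrt c) p) νg :=
    (integrable_const _).add ((integrable_qf _).const_mul _)
  rw [e, integral_add ha ((integrable_qf_sq _).const_mul _),
    integral_add (integrable_const _) ((integrable_qf _).const_mul _),
    integral_const, integral_const_mul, integral_const_mul, integral_qf, integral_qf_sq,
    Real.sq_sqrt hc, h4]
  simp only [probReal_univ, measure_univ, ENNReal.toReal_one, smul_eq_mul, one_mul]
  field_simp
  ring

end InfoAux

/-- For `m, n` positive, `c₁, …, c_m ≥ 0`, and `(W_{i,j})` i.i.d. standard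
circularly-symmetric complex Gaussians, the information density
`S = Σ_j Σ_i [log₂(1+cᵢ) + (1 − |√cᵢ·W_{i,j} − 1|²/(1+cᵢ))·log₂ e]` satisfies
`E[S] = n·Σᵢ log₂(1+cᵢ)` and `Var[S] = n·Σᵢ (1 − 1/(1+cᵢ)²)·(log₂ e)²`. -/
theorem information_density_moments
    {Ω : Type*} [MeasureSpace Ω] [IsProbabilityMeasure (ℙ : Measure Ω)]
    (m n : ℕ) (hm : 0 < m) (hn : 0 < n)
    (c : Fin m → ℝ) (hc : ∀ i, 0 ≤ c i)
    (W : Fin m × Fin n → Ω → ℂ)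
    (hWm : ∀ p, Measurable (W p))
    (hWlaw : ∀ p, Measure.map (W p) ℙ = stdComplexGaussian)
    (hWindep : iIndepFun W ℙ) :
    (∫ ω, (∑ j : Fin n, ∑ i : Fin m,
        (Real.logb 2 (1 + c i)
          + (1 - ‖(Real.sqrt (c i) : ℂ) * W (i, j) ω - 1‖ ^ 2 / (1 + c i))
            * Real.logb 2 (Real.exp 1))) ∂ℙ)
      = n * ∑ i : Fin m, Real.logb 2 (1 + c i) ∧
    variance (fun ω => ∑ j : Fin n, ∑ i : Fin m,
        (Real.logb 2 (1 + c i)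
          + (1 - ‖(Real.sqrt (c i) : ℂ) * W (i, j) ω - 1‖ ^ 2 / (1 + c i))
            * Real.logb 2 (Real.exp 1))) ℙ
      = n * ∑ i : Fin m, (1 - 1 / (1 + c i) ^ 2) * (Real.logb 2 (Real.exp 1)) ^ 2 := by
  classical
  set X : Fin m × Fin n → Ω → ℝ := fun p ω => InfoAux.gfun (c p.1) (W p ω) with hXdef
  have hgm : ∀ i : Fin m, Measurable (InfoAux.gfun (c i)) := fun i =>
    (InfoAux.continuous_gfun (c i)).measurable
  have hXm : ∀ p, Measurable (X p) := fun p => (hgm p.1).comp (hWm p)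
  have hint : ∀ p, Integrable (X p) ℙ := by
    intro p
    have h1 : Integrable (InfoAux.gfun (c p.1)) (Measure.map (W p) ℙ) := by
      rw [hWlaw p]; exact InfoAux.integrable_gfun_std
    exact (integrable_map_measure (InfoAux.continuous_gfun (c p.1)).aestronglyMeasurable
      (hWm p).aemeasurable).mp h1
  have hintsq : ∀ p, Integrable (fun ω => X p ω ^ 2) ℙ := by
    intro p
    have h1 : Integrable (fun w => InfoAux.gfun (c p.1) w ^ 2) (Measure.map (W p) ℙ) := by
      rw [hWlaw p]; exact InfoAux.integrable_gfun_sq_std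
    exact (integrable_map_measure
      (Continuous.aestronglyMeasurable (f := fun w => InfoAux.gfun (c p.1) w ^ 2)
        ((InfoAux.continuous_gfun (c p.1)).pow 2))
      (hWm p).aemeasurable).mp h1
  have hE : ∀ p, ∫ ω, X p ω ∂ℙ = Real.logb 2 (1 + c p.1) := by
    intro p
    have h1 := integral_map (hWm p).aemeasurable
      (InfoAux.continuous_gfun (c p.1)).aestronglyMeasurable
      (φ := W p) (μ := (ℙ : Measure Ω))
    rw [hWlaw p] at h1
    rw [← h1, InfoAux.integral_gfun_std (hc p.1)]
  have hEsq : ∀ p, ∫ ω, X p ω ^ 2 ∂ℙ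
      = Real.logb 2 (1 + c p.1) ^ 2
        + (1 - 1 / (1 + c p.1) ^ 2) * Real.logb 2 (Real.exp 1) ^ 2 := by
    intro p
    have h1 := integral_map (hWm p).aemeasurable
      (Continuous.aestronglyMeasurable (f := fun w => InfoAux.gfun (c p.1) w ^ 2)
        ((InfoAux.continuous_gfun (c p.1)).pow 2))
      (φ := W p) (μ := (ℙ : Measure Ω))
    rw [hWlaw p] at h1
    rw [← h1, InfoAux.integral_gfun_sq_std (hc p.1)]
  have hMem : ∀ p, MemLp (X p) 2 ℙ := fun p =>
    (memLp_two_iff_integrable_sq (hXm p).aestronglyMeasurable).mpr (hintsq p)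
  have hVar : ∀ p, variance (X p) ℙ
      = (1 - 1 / (1 + c p.1) ^ 2) * Real.logb 2 (Real.exp 1) ^ 2 := by
    intro p
    rw [variance_eq_sub (hMem p)]
    have h2 : (ℙ : Measure Ω)[(X p) ^ 2] = ∫ ω, X p ω ^ 2 ∂ℙ := by
      refine integral_congr_ae (Filter.Eventually.of_forall fun ω => ?_)
      simp [Pi.pow_apply]
    rw [h2, hEsq p, hE p]
    ring
  have hpt : ∀ ω : Ω, (∑ j : Fin n, ∑ i : Fin m, InfoAux.gfun (c i) (W (i, j) ω))
      = ∑ p : Fin m × Fin n, X p ω := by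
    intro ω
    rw [Fintype.sum_prod_type]
    exact Finset.sum_comm
  have hXsum : (fun ω => ∑ j : Fin n, ∑ i : Fin m, InfoAux.gfun (c i) (W (i, j) ω))
      = (∑ p : Fin m × Fin n, X p) := by
    funext ω
    rw [Finset.sum_apply]
    exact hpt ω
  have hcount : ∀ (v : Fin m → ℝ),
      (∑ p : Fin m × Fin n, v p.1) = n * ∑ i : Fin m, v i := by
    intro v
    rw [Fintype.sum_prod_type]
    simp only [Finset.sum_const, Finset.card_univ, Fintype.card_fin, nsmul_eq_mul]
    rw [← Finset.mul_sum]
  have main : (∫ ω, (∑ j : Fin n, ∑ i : Fin m, InfoAux.gfun (c i) (W (i, j) ω)) ∂ℙ)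
      = n * ∑ i : Fin m, Real.logb 2 (1 + c i) ∧
      variance (fun ω => ∑ j : Fin n, ∑ i : Fin m, InfoAux.gfun (c i) (W (i, j) ω)) ℙ
      = n * ∑ i : Fin m, (1 - 1 / (1 + c i) ^ 2) * Real.logb 2 (Real.exp 1) ^ 2 := by
    constructor
    · calc ∫ ω, (∑ j : Fin n, ∑ i : Fin m, InfoAux.gfun (c i) (W (i, j) ω)) ∂ℙ
          = ∫ ω, ∑ p : Fin m × Fin n, X p ω ∂ℙ :=
            integral_congr_ae (Filter.Eventually.of_forall hpt)
        _ = ∑ p : Fin m × Fin n, ∫ ω, X p ω ∂ℙ :=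
            integral_finset_sum _ fun p _ => hint p
        _ = ∑ p : Fin m × Fin n, Real.logb 2 (1 + c p.1) :=
            Finset.sum_congr rfl fun p _ => hE p
        _ = n * ∑ i : Fin m, Real.logb 2 (1 + c i) := hcount fun i => Real.logb 2 (1 + c i)
    · rw [hXsum]
      have hpair : Set.Pairwise ↑(Finset.univ : Finset (Fin m × Fin n))
          fun p q => IndepFun (X p) (X q) ℙ := by
        intro p _ q _ hpq
        exact (hWindep.comp (fun p => InfoAux.gfun (c p.1)) fun p => hgm p.1).indepFun hpq
      rw [IndepFun.variance_sum (fun p _ => hMem p) hpair]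
      calc ∑ p : Fin m × Fin n, variance (X p) ℙ
          = ∑ p : Fin m × Fin n,
              (1 - 1 / (1 + c p.1) ^ 2) * Real.logb 2 (Real.exp 1) ^ 2 :=
            Finset.sum_congr rfl fun p _ => hVar p
        _ = n * ∑ i : Fin m, (1 - 1 / (1 + c i) ^ 2) * Real.logb 2 (Real.exp 1) ^ 2 :=
            hcount fun i => (1 - 1 / (1 + c i) ^ 2) * Real.logb 2 (Real.exp 1) ^ 2
  exact main
end

section
/- (Meta-converse for maximal error probability.) Let 𝒜 and ℬ be measurable spaces, let K be a Markov kernel from 𝒜 to ℬ (the channel, x ↦ P_{Y|X=x}), let ε ∈ (0,1), and let M be a positive integer. Suppose c₁,…,c_M ∈ 𝒜 are codewords and D is a Markov kernel from ℬ to the finite set {1,…,M} (a randomized decoder) such that for every i, ∫ D(y)({i}) dK(cᵢ)(y) ≥ 1 − ε (maximal error probability at most ε). Then for every probability measure Q on ℬ there exists an index i with β_{1−ε}(K(cᵢ), Q) ≤ 1/M, where for probability measures P, Q on ℬ and α ∈ [0,1], β_α(P,Q) := inf { ∫ T dQ : T : ℬ → [0,1] measurable, ∫ T dP ≥ α }.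 Equivalently, M ≤ sup_i 1/β_{1−ε}(K(cᵢ), Q). -/
open MeasureTheory ProbabilityTheory

/-- The Neyman–Pearson function `β_α(P,Q)`: the optimal type-II error
`inf { ∫ T dQ : T measurable with values in [0,1], ∫ T dP ≥ α }` of a randomized test of
power at least `α` between `P` and `Q`. -/
noncomputable def npBeta {Ω : Type*} [MeasurableSpace Ω] (P Q : Measure Ω) (α : ℝ) : ℝ :=
  sInf {r : ℝ | ∃ T : Ω → ℝ, Measurable T ∧ (∀ ω, T ω ∈ Set.Icc (0 : ℝ) 1) ∧
    α ≤ ∫ ω, T ω ∂P ∧ r = ∫ ω, T ω ∂Q}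

/-- (Meta-converse, Lemma 4.) Let `K` be a Markov kernel (the channel
`x ↦ P_{Y|X=x}`), `ε ∈ (0,1)`, and `c₁, …, c_M` codewords with a randomized decoder `D`
whose probability of correctly decoding each message is at least `1 − ε`. Then for every
(output) probability measure `Q` there is an index `i` with
`β_{1−ε}(K(cᵢ), Q) ≤ 1/M`, i.e. `M ≤ sup_i 1/β_{1−ε}(K(cᵢ), Q)`. -/
theorem meta_converse
    {𝒜 ℬ : Type*} [MeasurableSpace 𝒜] [MeasurableSpace ℬ]
    (K : Kernel 𝒜 ℬ) [IsMarkovKernel K]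
    (ε : ℝ) (hε : ε ∈ Set.Ioo (0 : ℝ) 1)
    (M : ℕ) (hM : 0 < M) (c : Fin M → 𝒜)
    (D : Kernel ℬ (Fin M)) [IsMarkovKernel D]
    (hdec : ∀ i : Fin M, 1 - ε ≤ ∫ y, (D y {i}).toReal ∂(K (c i)))
    (Q : Measure ℬ) [IsProbabilityMeasure Q] :
    ∃ i : Fin M, npBeta (K (c i)) Q (1 - ε) ≤ 1 / M := by
  set T : Fin M → ℬ → ℝ := fun i y => (D y {i}).toReal with hT
  have hTmeas : ∀ i, Measurable (T i) := fun i =>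
    (Kernel.measurable_coe D (measurableSet_singleton i)).ennreal_toReal
  have hTmem : ∀ i y, T i y ∈ Set.Icc (0 : ℝ) 1 := by
    intro i y
    constructor
    · exact ENNReal.toReal_nonneg
    · have : D y {i} ≤ 1 := prob_le_one
      simpa using ENNReal.toReal_mono (by simp) this
  have hTint : ∀ i, Integrable (T i) Q := by
    intro i
    refine ⟨(hTmeas i).aestronglyMeasurable, ?_⟩
    apply HasFiniteIntegral.of_bounded (C := 1)
    filter_upwards with y
    rw [Real.norm_eq_abs, abs_of_nonneg (hTmem i y).1]
    exact (hTmem i y).2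
  have hsum : ∀ y, ∑ i, T i y = 1 := by
    intro y
    have h1 : ∑ i, D y {i} = D y Set.univ := by
      rw [← measure_biUnion_finset]
      · simp [Set.iUnion_of_singleton]
      · intro a _ b _ hab
        simp [Set.disjoint_singleton, hab]
      · intro i _; exact measurableSet_singleton i
    have h2 : D y Set.univ = 1 := measure_univ
    have := congrArg ENNReal.toReal (h1.trans h2)
    rw [ENNReal.toReal_sum (fun i _ => measure_ne_top _ _)] at this
    simpa using this
  have hsumint : ∑ i, ∫ y, T i y ∂Q = 1 := by
    rw [← integral_finset_sum _ (fun i _ => hTint i)]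
    simp [hsum]
  have hex : ∃ i : Fin M, ∫ y, T i y ∂Q ≤ 1 / M := by
    by_contra h
    push_neg at h
    have : (1 : ℝ) < ∑ i : Fin M, ∫ y, T i y ∂Q := by
      calc (1 : ℝ) = ∑ _i : Fin M, (1 / M : ℝ) := by
            rw [Finset.sum_const, Finset.card_univ, Fintype.card_fin, nsmul_eq_mul]
            exact (mul_one_div_cancel (Nat.cast_pos.mpr hM).ne').symm
          _ < ∑ i : Fin M, ∫ y, T i y ∂Q :=
            Finset.sum_lt_sum_of_nonempty (by simp [Fin.pos_iff_nonempty.mp hM])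
              (fun i _ => h i)
    rw [hsumint] at this
    exact absurd this (lt_irrefl 1)
  obtain ⟨i, hi⟩ := hex
  refine ⟨i, ?_⟩
  have hmem : ∫ y, T i y ∂Q ∈ {r : ℝ | ∃ S : ℬ → ℝ, Measurable S ∧
      (∀ ω, S ω ∈ Set.Icc (0 : ℝ) 1) ∧ (1 - ε) ≤ ∫ ω, S ω ∂(K (c i)) ∧
      r = ∫ ω, S ω ∂Q} := ⟨T i, hTmeas i, hTmem i, hdec i, rfl⟩
  have hbdd : BddBelow {r : ℝ | ∃ S : ℬ → ℝ, Measurable S ∧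
      (∀ ω, S ω ∈ Set.Icc (0 : ℝ) 1) ∧ (1 - ε) ≤ ∫ ω, S ω ∂(K (c i)) ∧
      r = ∫ ω, S ω ∂Q} := by
    refine ⟨0, ?_⟩
    rintro r ⟨S, _, hS, _, rfl⟩
    exact integral_nonneg fun ω => (hS ω).1
  exact le_trans (csInf_le hbdd hmem) hi
end
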